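/- arXiv:1704.08664 — 8 statements merged into one kernel-verified Lean document; each statement's English description precedes it below -/
import Mathlib

section
/- Let M be an A-submodule of A^p and let M_D be the B-submodule of B^{2p} generated by {h_D : h ∈ M}. Then for any h ∈ A^p, one has h ∈ M if and only if h_D ∈ M_D. -/
/-- The double of a tuple of functions: `h_D := (h ∘ π₁, h ∘ π₂)`. -/
def double {k X ι : Type} (h : ι → X → k) :
    (ι → X × X → k) × (ι → X × X → k) :=
  (fun i => h i ∘ Prod.fst, fun i => h i ∘ Prod.snd)

/-- The double of a submodule `M ⊆ A^ι`: the `B`-submodule of `B^{2ι}`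
generated by the doubles of elements of `M`, where `A = X → k`, `B = X × X → k`. -/
def doubleSub {k X ι : Type} [CommRing k] (M : Submodule (X → k) (ι → X → k)) :
    Submodule (X × X → k) ((ι → X × X → k) × (ι → X × X → k)) :=
  Submodule.span (X × X → k) (double '' (M : Set (ι → X → k)))

lemma mem_doubleSub {k X ι : Type} [CommRing k] {M : Submodule (X → k) (ι → X → k)}
    {h : ι → X → k} (hm : h ∈ M) : double h ∈ doubleSub M :=
  Submodule.subset_span ⟨h, hm, rfl⟩

theorem mem_iff_double_mem {k X : Type} [CommRing k] {p : ℕ}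
    (M : Submodule (X → k) (Fin p → X → k)) (h : Fin p → X → k) :
    h ∈ M ↔ double h ∈ doubleSub M := by
  constructor
  · exact mem_doubleSub
  · intro hd
    have key : ∀ x ∈ doubleSub M, (fun i z => x.1 i (z, z)) ∈ M := by
      intro x hx
      induction hx using Submodule.span_induction with
      | mem x hx =>
        obtain ⟨g, hg, rfl⟩ := hx
        simpa [double] using hg
      | zero => exact M.zero_mem
      | add x y _ _ hx hy => exact M.add_mem hx hy
      | smul α x _ hx => exact M.smul_mem (fun z => α (z, z)) hx
    exact key _ hd
end

section
/- Let M, N be A-submodules of A^p with doubles M_D, N_D ⊆ B^{2p}. Then M ⊆ N if and only if M_D ⊆ N_D; consequently M = N if and only if M_D = N_D. -/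
lemma diag_mem {k X ι : Type} [CommRing k] {N : Submodule (X → k) (ι → X → k)}
    {v : (ι → X × X → k) × (ι → X × X → k)} (hv : v ∈ doubleSub N) :
    (fun i x => v.1 i (x, x)) ∈ N := by
  induction hv using Submodule.span_induction with
  | mem w hw =>
    obtain ⟨g, hg, rfl⟩ := hw
    exact hg
  | zero => exact N.zero_mem
  | add w u _ _ ih1 ih2 => exact N.add_mem ih1 ih2
  | smul b w _ ih => exact N.smul_mem (fun x => b (x, x)) ih

theorem doubleSub_le_iff_and_eq_iff {k X : Type} [CommRing k] {p : ℕ}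
    (M N : Submodule (X → k) (Fin p → X → k)) :
    (M ≤ N ↔ doubleSub M ≤ doubleSub N) ∧ (M = N ↔ doubleSub M = doubleSub N) := by
  have key : M ≤ N ↔ doubleSub M ≤ doubleSub N := by
    constructor
    · intro hle
      exact Submodule.span_mono (Set.image_mono hle)
    · intro hle h hm
      exact diag_mem (hle (mem_doubleSub hm))
  refine ⟨key, ?_⟩
  have key' : N ≤ M ↔ doubleSub N ≤ doubleSub M := by
    constructor
    · intro hle
      exact Submodule.span_mono (Set.image_mono hle)
    · intro hle h hm
      exact diag_mem (hle (mem_doubleSub hm))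
  rw [le_antisymm_iff, le_antisymm_iff, key, key']
end

section
/- Let M ⊆ A^p and N ⊆ A^q be A-submodules and φ : M → N an A-module homomorphism. Then there exists a unique B-module homomorphism φ_D : M_D → N_D satisfying φ_D(h_D) = (φ(h))_D for all h ∈ M. -/
lemma key_ker {k X : Type} [CommRing k] {p q : ℕ}
    {M : Submodule (X → k) (Fin p → X → k)} {N : Submodule (X → k) (Fin q → X → k)}
    (φ : M →ₗ[X → k] N) (c : M →₀ (X × X → k))
    (hc : Finsupp.linearCombination (X × X → k)
        (fun m : M => double (m : Fin p → X → k)) c = 0) :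
    Finsupp.linearCombination (X × X → k)
        (fun m : M => double ((φ m : N) : Fin q → X → k)) c = 0 := by
  rw [Finsupp.linearCombination_apply, Finsupp.sum] at hc ⊢
  have h1 : ∀ (i : Fin p) (z w : X),
      ∑ m ∈ c.support, c m (z, w) * (m : Fin p → X → k) i z = 0 := by
    intro i z w
    have := congrArg (fun v => v.1 i (z, w)) hc
    simpa [double, Finset.sum_apply, Prod.fst_sum] using this
  have h2 : ∀ (i : Fin p) (z w : X),
      ∑ m ∈ c.support, c m (z, w) * (m : Fin p → X → k) i w = 0 := by
    intro i z w
    have := congrArg (fun v => v.2 i (z, w)) hc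
    simpa [double, Finset.sum_apply, Prod.snd_sum] using this
  have h1' : ∀ (i : Fin q) (z w : X),
      ∑ m ∈ c.support, c m (z, w) * ((φ m : N) : Fin q → X → k) i z = 0 := by
    intro i z w
    set sW : M := ∑ m ∈ c.support, (fun z => c m (z, w)) • m with hsW
    have hsW0 : sW = 0 := by
      apply Subtype.ext
      have : (sW : Fin p → X → k) = ∑ m ∈ c.support, (fun z => c m (z, w)) • (m : Fin p → X → k) := by
        simp [hsW]
      rw [this]
      funext j z'
      simpa [Finset.sum_apply, Pi.smul_apply, smul_eq_mul] using h1 j z' w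
    have hφ : φ sW = 0 := by rw [hsW0, map_zero]
    have hφ' : ((φ sW : N) : Fin q → X → k)
        = ∑ m ∈ c.support, (fun z => c m (z, w)) • ((φ m : N) : Fin q → X → k) := by
      rw [hsW, map_sum]
      push_cast
      simp [map_smul]
    have := congrArg (fun f => f i z) (hφ'.symm.trans (by rw [hφ]))
    simpa [Finset.sum_apply, Pi.smul_apply, smul_eq_mul] using this
  have h2' : ∀ (i : Fin q) (z w : X),
      ∑ m ∈ c.support, c m (z, w) * ((φ m : N) : Fin q → X → k) i w = 0 := by
    intro i z w
    set tZ : M := ∑ m ∈ c.support, (fun w => c m (z, w)) • m with htZ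
    have htZ0 : tZ = 0 := by
      apply Subtype.ext
      have : (tZ : Fin p → X → k) = ∑ m ∈ c.support, (fun w => c m (z, w)) • (m : Fin p → X → k) := by
        simp [htZ]
      rw [this]
      funext j w'
      simpa [Finset.sum_apply, Pi.smul_apply, smul_eq_mul] using h2 j z w'
    have hφ : φ tZ = 0 := by rw [htZ0, map_zero]
    have hφ' : ((φ tZ : N) : Fin q → X → k)
        = ∑ m ∈ c.support, (fun w => c m (z, w)) • ((φ m : N) : Fin q → X → k) := by
      rw [htZ, map_sum]
      push_cast
      simp [map_smul]
    have := congrArg (fun f => f i w) (hφ'.symm.trans (by rw [hφ]))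
    simpa [Finset.sum_apply, Pi.smul_apply, smul_eq_mul] using this
  apply Prod.ext
  · funext i zw
    obtain ⟨z, w⟩ := zw
    simpa [double, Prod.fst_sum, Finset.sum_apply] using h1' i z w
  · funext i zw
    obtain ⟨z, w⟩ := zw
    simpa [double, Prod.snd_sum, Finset.sum_apply] using h2' i z w
theorem exists_unique_double_hom {k X : Type} [CommRing k] {p q : ℕ}
    (M : Submodule (X → k) (Fin p → X → k)) (N : Submodule (X → k) (Fin q → X → k))
    (φ : M →ₗ[X → k] N) :
    ∃! φD : doubleSub M →ₗ[X × X → k] doubleSub N,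
      ∀ (h : Fin p → X → k) (hm : h ∈ M),
        φD ⟨double h, mem_doubleSub hm⟩
          = ⟨double (φ ⟨h, hm⟩ : Fin q → X → k), mem_doubleSub (φ ⟨h, hm⟩).2⟩ := by
  classical
  let T1 : (M →₀ (X × X → k)) →ₗ[X × X → k] _ :=
    Finsupp.linearCombination (X × X → k) (fun m : M => double (m : Fin p → X → k))
  have hrange : LinearMap.range T1 = doubleSub M := by
    rw [Finsupp.range_linearCombination]
    unfold doubleSub
    congr 1
    rw [show (fun m : M => double (m : Fin p → X → k)) = double ∘ Subtype.val from rfl,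
      Set.range_comp, Subtype.range_coe]
  let T2 : (M →₀ (X × X → k)) →ₗ[X × X → k] _ :=
    Finsupp.linearCombination (X × X → k) (fun m : M => double ((φ m : N) : Fin q → X → k))
  have hT2range : ∀ c, T2 c ∈ doubleSub N := by
    intro c
    have h1 : T2 c ∈ LinearMap.range T2 := LinearMap.mem_range_self _ _
    rw [Finsupp.range_linearCombination] at h1
    refine Submodule.span_le.2 ?_ h1
    rintro _ ⟨m, rfl⟩
    exact mem_doubleSub (φ m).2
  let T2' : (M →₀ (X × X → k)) →ₗ[X × X → k] doubleSub N := T2.codRestrict _ hT2range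
  have hker : LinearMap.ker T1 ≤ LinearMap.ker T2' := by
    intro c hc
    exact LinearMap.mem_ker.2 (Subtype.ext (key_ker φ c (LinearMap.mem_ker.1 hc)))
  let lift := Submodule.liftQ (LinearMap.ker T1) T2' hker
  let E : doubleSub M ≃ₗ[X × X → k] ((M →₀ (X × X → k)) ⧸ LinearMap.ker T1) :=
    (LinearEquiv.ofEq _ _ hrange.symm).trans T1.quotKerEquivRange.symm
  have hprop : ∀ (h : Fin p → X → k) (hm : h ∈ M),
      (lift ∘ₗ E.toLinearMap) ⟨double h, mem_doubleSub hm⟩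
        = ⟨double (φ ⟨h, hm⟩ : Fin q → X → k), mem_doubleSub (φ ⟨h, hm⟩).2⟩ := by
    intro h hm
    have hTs : T1 (Finsupp.single ⟨h, hm⟩ 1) = double h := by
      simp [T1]
    have hE : E ⟨double h, mem_doubleSub hm⟩
        = Submodule.Quotient.mk (Finsupp.single (⟨h, hm⟩ : M) 1) := by
      show (LinearEquiv.ofEq _ _ hrange.symm ≪≫ₗ T1.quotKerEquivRange.symm) _ = _
      rw [LinearEquiv.trans_apply, LinearEquiv.symm_apply_eq]
      apply Subtype.ext
      rw [LinearMap.quotKerEquivRange_apply_mk, hTs]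
      rfl
    show lift (E ⟨double h, mem_doubleSub hm⟩) = _
    rw [hE]
    show T2' (Finsupp.single (⟨h, hm⟩ : M) 1) = _
    apply Subtype.ext
    simp [T2', T2]
  refine ⟨lift ∘ₗ E.toLinearMap, hprop, ?_⟩
  intro ψ hψ
  apply LinearMap.ext
  rintro ⟨v, hv⟩
  induction hv using Submodule.span_induction with
  | mem x hx =>
    obtain ⟨h, hm, rfl⟩ := hx
    rw [hψ h hm, hprop h hm]
  | zero =>
    have : (⟨0, Submodule.zero_mem _⟩ : doubleSub M) = 0 := rfl
    rw [this, map_zero, map_zero]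
  | add x y hx hy ihx ihy =>
    have : (⟨x + y, Submodule.add_mem _ hx hy⟩ : doubleSub M)
        = ⟨x, hx⟩ + ⟨y, hy⟩ := rfl
    rw [this, map_add, map_add, ihx, ihy]
  | smul b x hx ih =>
    have : (⟨b • x, Submodule.smul_mem _ b hx⟩ : doubleSub M)
        = b • (⟨x, hx⟩ : doubleSub M) := rfl
    rw [this, map_smul, map_smul, ih]
end

section
/- Let φ, φ' : M → N be A-module homomorphisms between A-submodules M ⊆ A^p and N ⊆ A^q. Then φ = φ' if and only if φ_D = φ'_D. Moreover (φ + φ')_D = φ_D + φ'_D. -/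
lemma double_inj {k X ι : Type} {a b : ι → X → k} (h : double a = double b) : a = b := by
  funext i x
  have := congrFun (congrFun (congrArg Prod.fst h) i) (x, x)
  simpa [double] using this

lemma double_add {k X ι : Type} [CommRing k] (a b : ι → X → k) :
    double (a + b) = double a + double b := rfl

lemma ext_double {k X ι : Type} [CommRing k] {M : Submodule (X → k) (ι → X → k)}
    {T : Type} [AddCommMonoid T] [Module (X × X → k) T]
    (f g : doubleSub M →ₗ[X × X → k] T)
    (hfg : ∀ (h : ι → X → k) (hm : h ∈ M),
      f ⟨double h, mem_doubleSub hm⟩ = g ⟨double h, mem_doubleSub hm⟩) : f = g := by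
  apply LinearMap.ext
  rintro ⟨x, hx⟩
  refine Submodule.span_induction (p := fun x hx => f ⟨x, hx⟩ = g ⟨x, hx⟩) ?_ ?_ ?_ ?_ hx
  · rintro _ ⟨h, hm, rfl⟩; exact hfg h hm
  · show f 0 = g 0; simp
  · intro a b ha hb ih1 ih2
    show f (⟨a, ha⟩ + ⟨b, hb⟩) = g (⟨a, ha⟩ + ⟨b, hb⟩)
    rw [map_add, map_add, ih1, ih2]
  · intro r a ha ih
    show f (r • ⟨a, ha⟩) = g (r • ⟨a, ha⟩)
    rw [map_smul, map_smul, ih]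

theorem doubleHom_inj_and_add {k X : Type} [CommRing k] {p q : ℕ}
    (M : Submodule (X → k) (Fin p → X → k)) (N : Submodule (X → k) (Fin q → X → k))
    (φ φ' : M →ₗ[X → k] N)
    (φD φ'D ψD : doubleSub M →ₗ[X × X → k] doubleSub N)
    (hφD : ∀ (h : Fin p → X → k) (hm : h ∈ M),
      φD ⟨double h, mem_doubleSub hm⟩
        = ⟨double (φ ⟨h, hm⟩ : Fin q → X → k), mem_doubleSub (φ ⟨h, hm⟩).2⟩)
    (hφ'D : ∀ (h : Fin p → X → k) (hm : h ∈ M),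
      φ'D ⟨double h, mem_doubleSub hm⟩
        = ⟨double (φ' ⟨h, hm⟩ : Fin q → X → k), mem_doubleSub (φ' ⟨h, hm⟩).2⟩)
    (hψD : ∀ (h : Fin p → X → k) (hm : h ∈ M),
      ψD ⟨double h, mem_doubleSub hm⟩
        = ⟨double ((φ + φ') ⟨h, hm⟩ : Fin q → X → k), mem_doubleSub ((φ + φ') ⟨h, hm⟩).2⟩) :
    (φ = φ' ↔ φD = φ'D) ∧ ψD = φD + φ'D := by
  constructor
  · constructor
    · intro h
      subst h
      exact ext_double φD φ'D fun h hm => (hφD h hm).trans (hφ'D h hm).symm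
    · intro hD
      apply LinearMap.ext
      rintro ⟨h, hm⟩
      have h1 := hφD h hm
      rw [hD, hφ'D h hm] at h1
      have h2 := congrArg Subtype.val h1.symm
      exact Subtype.ext (double_inj h2)
  · refine ext_double ψD (φD + φ'D) fun h hm => ?_
    rw [hψD h hm]
    show _ = φD _ + φ'D _
    rw [hφD h hm, hφ'D h hm]
    apply Subtype.ext
    show double _ = double _ + double _
    rw [← double_add]
    rfl
end

section
/- Let φ : M → N be an A-module homomorphism with double φ_D : M_D → N_D. Then φ is surjective if and only if φ_D is surjective. -/
/-- Restriction to the diagonal: inverse of `double` on doubles. -/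
def diagRes {k X ι : Type} (z : (ι → X × X → k) × (ι → X × X → k)) : ι → X → k :=
  fun i t => z.1 i (t, t)

theorem surjective_iff_double_surjective {k X : Type} [CommRing k] {p q : ℕ}
    (M : Submodule (X → k) (Fin p → X → k)) (N : Submodule (X → k) (Fin q → X → k))
    (φ : M →ₗ[X → k] N)
    (φD : doubleSub M →ₗ[X × X → k] doubleSub N)
    (hφD : ∀ (h : Fin p → X → k) (hm : h ∈ M),
      φD ⟨double h, mem_doubleSub hm⟩
        = ⟨double (φ ⟨h, hm⟩ : Fin q → X → k), mem_doubleSub (φ ⟨h, hm⟩).2⟩) :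
    Function.Surjective φ ↔ Function.Surjective φD := by
  constructor
  · intro hs y
    obtain ⟨yv, hy⟩ := y
    have key : ∀ yv (hy : yv ∈ doubleSub N),
        ∃ x, ((φD x : doubleSub N) : (Fin q → X × X → k) × (Fin q → X × X → k)) = yv := by
      intro yv hy
      induction hy using Submodule.span_induction with
      | mem v hv =>
        obtain ⟨n, hn, rfl⟩ := hv
        obtain ⟨m, hm⟩ := hs ⟨n, hn⟩
        refine ⟨⟨double m.1, mem_doubleSub m.2⟩, ?_⟩
        rw [hφD m.1 m.2]
        simp only [Subtype.coe_eta, hm]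
      | zero => exact ⟨0, by simp⟩
      | add v w hv hw ihv ihw =>
        obtain ⟨x1, h1⟩ := ihv
        obtain ⟨x2, h2⟩ := ihw
        exact ⟨x1 + x2, by simp [h1, h2]⟩
      | smul b v hv ihv =>
        obtain ⟨x1, h1⟩ := ihv
        exact ⟨b • x1, by simp [h1]⟩
    obtain ⟨x, hx⟩ := key yv hy
    exact ⟨x, Subtype.ext hx⟩
  · intro hs
    have key : ∀ x (hx : x ∈ doubleSub M),
        ∃ hm : diagRes x ∈ M,
          (φ ⟨diagRes x, hm⟩ : Fin q → X → k)
            = diagRes ((φD ⟨x, hx⟩ : doubleSub N) :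
                (Fin q → X × X → k) × (Fin q → X × X → k)) := by
      intro x hx
      induction hx using Submodule.span_induction with
      | mem v hv =>
        obtain ⟨h, hh, rfl⟩ := hv
        refine ⟨hh, ?_⟩
        have : (⟨double h, Submodule.subset_span ⟨h, hh, rfl⟩⟩ : doubleSub M)
            = ⟨double h, mem_doubleSub hh⟩ := rfl
        rw [this, hφD h hh]
        rfl
      | zero =>
        refine ⟨M.zero_mem, ?_⟩
        have : (⟨(0 : (Fin p → X × X → k) × (Fin p → X × X → k)),
            (doubleSub M).zero_mem⟩ : doubleSub M) = 0 := rfl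
        rw [this, map_zero]
        have h0 : (⟨diagRes 0, M.zero_mem⟩ : M) = 0 := Subtype.ext rfl
        rw [h0, map_zero]
        rfl
      | add v w hv hw ihv ihw =>
        obtain ⟨hm1, e1⟩ := ihv
        obtain ⟨hm2, e2⟩ := ihw
        refine ⟨M.add_mem hm1 hm2, ?_⟩
        have hsum : (⟨v + w, (doubleSub M).add_mem hv hw⟩ : doubleSub M)
            = ⟨v, hv⟩ + ⟨w, hw⟩ := rfl
        have hsum2 : (⟨diagRes (v + w), M.add_mem hm1 hm2⟩ : M)
            = ⟨diagRes v, hm1⟩ + ⟨diagRes w, hm2⟩ := Subtype.ext rfl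
        rw [hsum, hsum2, map_add, map_add]
        show (φ ⟨diagRes v, hm1⟩ : Fin q → X → k) + (φ ⟨diagRes w, hm2⟩ : Fin q → X → k) = _
        rw [e1, e2]
        rfl
      | smul b v hv ihv =>
        obtain ⟨hm1, e1⟩ := ihv
        refine ⟨M.smul_mem (fun t => b (t, t)) hm1, ?_⟩
        have hsc : (⟨b • v, (doubleSub M).smul_mem b hv⟩ : doubleSub M)
            = b • ⟨v, hv⟩ := rfl
        have hsc2 : (⟨diagRes (b • v), M.smul_mem _ hm1⟩ : M)
            = (fun t => b (t, t)) • ⟨diagRes v, hm1⟩ := Subtype.ext rfl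
        rw [hsc, hsc2, map_smul, map_smul]
        show (fun t => b (t, t)) • (φ ⟨diagRes v, hm1⟩ : Fin q → X → k) = _
        rw [e1]
        rfl
    intro n
    obtain ⟨x, hx⟩ := hs ⟨double n.1, mem_doubleSub n.2⟩
    obtain ⟨hm, e⟩ := key x.1 x.2
    refine ⟨⟨diagRes x.1, hm⟩, Subtype.ext ?_⟩
    have hxx : (⟨x.1, x.2⟩ : doubleSub M) = x := rfl
    rw [e, hxx, hx]
    rfl
end

section
/- Let φ : M → N be an A-module homomorphism with double φ_D : M_D → N_D. Then φ is bijective (an A-module isomorphism) if and only if φ_D is bijective (a B-module isomorphism). -/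
/-- Slice a function of pairs at second coordinate `y`. -/
def sl1 {k X : Type} {p : ℕ} (y : X) (u : Fin p → X × X → k) : Fin p → X → k :=
  fun i x => u i (x, y)

/-- Slice a function of pairs at first coordinate `y`. -/
def sl2 {k X : Type} {p : ℕ} (y : X) (u : Fin p → X × X → k) : Fin p → X → k :=
  fun i x => u i (y, x)

lemma key {k X : Type} [CommRing k] {p q : ℕ}
    (M : Submodule (X → k) (Fin p → X → k)) (N : Submodule (X → k) (Fin q → X → k))
    (φ : M →ₗ[X → k] N)
    (φD : doubleSub M →ₗ[X × X → k] doubleSub N)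
    (hφD : ∀ (h : Fin p → X → k) (hm : h ∈ M),
      φD ⟨double h, mem_doubleSub hm⟩
        = ⟨double (φ ⟨h, hm⟩ : Fin q → X → k), mem_doubleSub (φ ⟨h, hm⟩).2⟩)
    (v : (Fin p → X × X → k) × (Fin p → X × X → k)) (hv : v ∈ doubleSub M) (y : X) :
    ∃ (h1 : sl1 y v.1 ∈ M) (h2 : sl2 y v.2 ∈ M),
      ((φ ⟨sl1 y v.1, h1⟩ : Fin q → X → k) = sl1 y (φD ⟨v, hv⟩).val.1) ∧
      ((φ ⟨sl2 y v.2, h2⟩ : Fin q → X → k) = sl2 y (φD ⟨v, hv⟩).val.2) := by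
  induction hv using Submodule.span_induction with
  | mem v hvmem =>
      obtain ⟨h, hm, rfl⟩ := hvmem
      refine ⟨hm, hm, ?_, ?_⟩ <;> rw [hφD h hm] <;> rfl
  | zero =>
      refine ⟨M.zero_mem, M.zero_mem, ?_, ?_⟩
      · show (φ 0 : Fin q → X → k) = sl1 y (φD 0).val.1
        rw [map_zero, map_zero]; rfl
      · show (φ 0 : Fin q → X → k) = sl2 y (φD 0).val.2
        rw [map_zero, map_zero]; rfl
  | add a b ha hb iha ihb =>
      obtain ⟨h1a, h2a, e1a, e2a⟩ := iha
      obtain ⟨h1b, h2b, e1b, e2b⟩ := ihb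
      refine ⟨M.add_mem h1a h1b, M.add_mem h2a h2b, ?_, ?_⟩
      · show (φ (⟨sl1 y a.1, h1a⟩ + ⟨sl1 y b.1, h1b⟩) : Fin q → X → k)
          = sl1 y ((φD (⟨a, ha⟩ + ⟨b, hb⟩)).val.1)
        rw [map_add, map_add]
        funext i x
        exact congrArg₂ (· + ·) (congrFun (congrFun e1a i) x) (congrFun (congrFun e1b i) x)
      · show (φ (⟨sl2 y a.2, h2a⟩ + ⟨sl2 y b.2, h2b⟩) : Fin q → X → k)
          = sl2 y ((φD (⟨a, ha⟩ + ⟨b, hb⟩)).val.2)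
        rw [map_add, map_add]
        funext i x
        exact congrArg₂ (· + ·) (congrFun (congrFun e2a i) x) (congrFun (congrFun e2b i) x)
  | smul b a ha iha =>
      obtain ⟨h1a, h2a, e1a, e2a⟩ := iha
      refine ⟨M.smul_mem (fun x => b (x, y)) h1a, M.smul_mem (fun x => b (y, x)) h2a, ?_, ?_⟩
      · show (φ ((fun x => b (x, y)) • ⟨sl1 y a.1, h1a⟩) : Fin q → X → k)
          = sl1 y ((φD (b • ⟨a, ha⟩)).val.1)
        rw [map_smul, map_smul]
        funext i x
        show b (x, y) * (φ ⟨sl1 y a.1, h1a⟩ : Fin q → X → k) i x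
          = b (x, y) * (φD ⟨a, ha⟩).val.1 i (x, y)
        rw [congrFun (congrFun e1a i) x]
        rfl
      · show (φ ((fun x => b (y, x)) • ⟨sl2 y a.2, h2a⟩) : Fin q → X → k)
          = sl2 y ((φD (b • ⟨a, ha⟩)).val.2)
        rw [map_smul, map_smul]
        funext i x
        show b (y, x) * (φ ⟨sl2 y a.2, h2a⟩ : Fin q → X → k) i x
          = b (y, x) * (φD ⟨a, ha⟩).val.2 i (y, x)
        rw [congrFun (congrFun e2a i) x]
        rfl

theorem bijective_iff_double_bijective {k X : Type} [CommRing k] {p q : ℕ}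
    (M : Submodule (X → k) (Fin p → X → k)) (N : Submodule (X → k) (Fin q → X → k))
    (φ : M →ₗ[X → k] N)
    (φD : doubleSub M →ₗ[X × X → k] doubleSub N)
    (hφD : ∀ (h : Fin p → X → k) (hm : h ∈ M),
      φD ⟨double h, mem_doubleSub hm⟩
        = ⟨double (φ ⟨h, hm⟩ : Fin q → X → k), mem_doubleSub (φ ⟨h, hm⟩).2⟩) :
    Function.Bijective φ ↔ Function.Bijective φD := by
  constructor
  · rintro ⟨hinj, hsurj⟩
    constructor
    · rw [injective_iff_map_eq_zero]
      intro z hz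
      have hz' : φD ⟨z.1, z.2⟩ = 0 := hz
      ext i a
      · obtain ⟨h1, h2, e1, e2⟩ := key M N φ φD hφD z.1 z.2 a.2
        have : (⟨sl1 a.2 z.val.1, h1⟩ : M) = 0 := by
          apply hinj
          rw [map_zero]
          apply Subtype.ext
          rw [e1, hz']
          rfl
        have := congrFun (congrFun (congrArg Subtype.val this) i) a.1
        simpa [sl1] using this
      · obtain ⟨h1, h2, e1, e2⟩ := key M N φ φD hφD z.1 z.2 a.1
        have : (⟨sl2 a.1 z.val.2, h2⟩ : M) = 0 := by
          apply hinj
          rw [map_zero]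
          apply Subtype.ext
          rw [e2, hz']
          rfl
        have := congrFun (congrFun (congrArg Subtype.val this) i) a.2
        simpa [sl2] using this
    · intro w
      have hle : doubleSub N ≤ Submodule.map (doubleSub N).subtype (LinearMap.range φD) := by
        apply Submodule.span_le.mpr
        rintro _ ⟨g, hg, rfl⟩
        obtain ⟨m, hm⟩ := hsurj ⟨g, hg⟩
        refine ⟨φD ⟨double m.1, mem_doubleSub m.2⟩, ⟨_, rfl⟩, ?_⟩
        rw [hφD m.1 m.2]
        show double (φ ⟨m.1, m.2⟩ : Fin q → X → k) = double g
        rw [show (⟨m.1, m.2⟩ : M) = m from rfl, hm]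
      obtain ⟨u, ⟨z, hzu⟩, huw⟩ := hle w.2
      exact ⟨z, Subtype.ext (hzu ▸ huw)⟩
  · rintro ⟨hinj, hsurj⟩
    constructor
    · rw [injective_iff_map_eq_zero]
      intro m hm0
      have h1 : φD ⟨double m.1, mem_doubleSub m.2⟩ = 0 := by
        rw [hφD m.1 m.2]
        apply Subtype.ext
        show double (φ ⟨m.1, m.2⟩ : Fin q → X → k) = 0
        rw [show (⟨m.1, m.2⟩ : M) = m from rfl, hm0]
        rfl
      have h2 := hinj (h1.trans (map_zero φD).symm)
      have h3 : double m.1 = 0 := congrArg Subtype.val h2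
      apply Subtype.ext
      funext i x
      exact congrFun (congrArg (fun f => f i) (congrArg Prod.fst h3)) (x, x)
    · intro g
      by_cases hX : Nonempty X
      · obtain ⟨y⟩ := hX
        obtain ⟨z, hzg⟩ := hsurj ⟨double g.1, mem_doubleSub g.2⟩
        obtain ⟨h1, h2, e1, e2⟩ := key M N φ φD hφD z.1 z.2 y
        refine ⟨⟨sl1 y z.val.1, h1⟩, Subtype.ext ?_⟩
        rw [e1, show (⟨z.1, z.2⟩ : doubleSub M) = z from rfl, hzg]
        rfl
      · refine ⟨0, Subtype.ext ?_⟩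
        funext i x
        exact absurd ⟨x⟩ hX
end

section
/- Let φ : M → N be an A-module homomorphism with double φ_D : M_D → N_D. Then φ is the zero homomorphism if and only if φ_D is the zero homomorphism. -/
lemma double_zero {k X ι : Type} [CommRing k] : double (0 : ι → X → k) = 0 := rfl

lemma double_eq_zero {k X ι : Type} [CommRing k] {g : ι → X → k}
    (h : double g = 0) : g = 0 := by
  funext i x
  have := congrArg (fun p => p.1 i (x, x)) h
  simpa [double] using this

theorem zero_iff_double_zero {k X : Type} [CommRing k] {p q : ℕ}
    (M : Submodule (X → k) (Fin p → X → k)) (N : Submodule (X → k) (Fin q → X → k))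
    (φ : M →ₗ[X → k] N)
    (φD : doubleSub M →ₗ[X × X → k] doubleSub N)
    (hφD : ∀ (h : Fin p → X → k) (hm : h ∈ M),
      φD ⟨double h, mem_doubleSub hm⟩
        = ⟨double (φ ⟨h, hm⟩ : Fin q → X → k), mem_doubleSub (φ ⟨h, hm⟩).2⟩) :
    φ = 0 ↔ φD = 0 := by
  constructor
  · intro h0
    have key : ∀ v (hv : v ∈ doubleSub M), φD ⟨v, hv⟩ = 0 := by
      intro v hv
      induction hv using Submodule.span_induction with
      | mem v hvmem =>
        obtain ⟨h, hm, rfl⟩ := hvmem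
        have := hφD h hm
        simp only [h0, LinearMap.zero_apply] at this
        rw [this]
        exact Subtype.ext (by simpa using double_zero)
      | zero =>
        have : (⟨0, Submodule.zero_mem _⟩ : doubleSub M) = 0 := rfl
        rw [this, map_zero]
      | add x y hx hy ihx ihy =>
        have : (⟨x + y, Submodule.add_mem _ hx hy⟩ : doubleSub M)
            = ⟨x, hx⟩ + ⟨y, hy⟩ := rfl
        rw [this, map_add, ihx, ihy, add_zero]
      | smul a x hx ih =>
        have : (⟨a • x, Submodule.smul_mem _ a hx⟩ : doubleSub M)
            = a • ⟨x, hx⟩ := rfl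
        rw [this, map_smul, ih, smul_zero]
    apply LinearMap.ext
    rintro ⟨v, hv⟩
    simpa using key v hv
  · intro h0
    apply LinearMap.ext
    rintro ⟨h, hm⟩
    have := hφD h hm
    rw [h0] at this
    simp only [LinearMap.zero_apply] at this
    have hd : double (φ ⟨h, hm⟩ : Fin q → X → k) = 0 := by
      have := congrArg Subtype.val this.symm
      simpa using this
    have hz : (φ ⟨h, hm⟩ : Fin q → X → k) = 0 := double_eq_zero hd
    simp only [LinearMap.zero_apply]
    exact Subtype.ext (by simpa using hz)
end

section
/- Let M ⊆ A^p be an A-submodule. If the B-module M_D has finite length, then the A-module M has finite length and length_A(M) ≤ length_B(M_D). -/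
/-- Module length as the supremum of lengths of strictly ascending chains of submodules. -/
noncomputable def moduleLength (R M : Type) [CommRing R] [AddCommGroup M] [Module R M] :
    WithBot ℕ∞ :=
  Order.krullDim (Submodule R M)

/-- Key lemma: if the double of `h` lies in the doubled submodule, then `h ∈ N`. -/
lemma key_s16 {k X : Type} [CommRing k] {p : ℕ} (N : Submodule (X → k) (Fin p → X → k))
    (h : Fin p → X → k) (hh : double h ∈ doubleSub N) : h ∈ N := by
  by_cases hX : Nonempty X
  · obtain ⟨y₀⟩ := hX
    set e : ((Fin p → X × X → k) × (Fin p → X × X → k)) → (Fin p → X → k) :=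
      fun w i x => w.1 i (x, y₀) with he
    have main : ∀ w ∈ doubleSub N, e w ∈ N := by
      intro w hw
      refine Submodule.span_induction ?_ ?_ ?_ ?_ hw
      · rintro _ ⟨g, hg, rfl⟩
        have : e (double g) = g := rfl
        rw [this]; exact hg
      · have : e 0 = 0 := rfl
        rw [this]; exact N.zero_mem
      · intro w₁ w₂ _ _ h1 h2
        have : e (w₁ + w₂) = e w₁ + e w₂ := rfl
        rw [this]; exact N.add_mem h1 h2
      · intro c w₁ _ h1
        have : e (c • w₁) = (fun x => c (x, y₀)) • e w₁ := rfl
        rw [this]; exact N.smul_mem _ h1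
    have := main _ hh
    have he2 : e (double h) = h := rfl
    rwa [he2] at this
  · rw [not_nonempty_iff] at hX
    have : h = 0 := Subsingleton.elim _ _
    rw [this]; exact N.zero_mem

lemma doubleSub_mono {k X ι : Type} [CommRing k] {M N : Submodule (X → k) (ι → X → k)}
    (hmn : M ≤ N) : doubleSub M ≤ doubleSub N :=
  Submodule.span_mono (Set.image_mono hmn)

/-- The induced map on submodule lattices. -/
noncomputable def liftDouble {k X : Type} [CommRing k] {p : ℕ}
    (M : Submodule (X → k) (Fin p → X → k)) (N : Submodule (X → k) M) :
    Submodule (X × X → k) (doubleSub M) :=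
  Submodule.comap (doubleSub M).subtype (doubleSub (N.map M.subtype))

lemma liftDouble_strictMono {k X : Type} [CommRing k] {p : ℕ}
    (M : Submodule (X → k) (Fin p → X → k)) : StrictMono (liftDouble M) := by
  intro N N' hlt
  constructor
  · exact Submodule.comap_mono (doubleSub_mono (Submodule.map_mono hlt.le))
  · intro hle
    obtain ⟨x, hx', hx⟩ := SetLike.exists_of_lt hlt
    have hxM : (x : Fin p → X → k) ∈ M := x.2
    have hmem : (⟨double (x : Fin p → X → k), mem_doubleSub hxM⟩ : doubleSub M)
        ∈ liftDouble M N' := mem_doubleSub ⟨x, hx', rfl⟩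
    have hkey : (x : Fin p → X → k) ∈ N.map M.subtype := key_s16 _ _ (hle hmem)
    obtain ⟨y, hy, hyx⟩ := hkey
    have : y = x := Subtype.ext hyx
    exact hx (this ▸ hy)

theorem length_le_length_double {k X : Type} [CommRing k] {p : ℕ}
    (M : Submodule (X → k) (Fin p → X → k))
    (hfin : moduleLength (X × X → k) (doubleSub M) ≠ ⊤) :
    moduleLength (X → k) M ≠ ⊤ ∧
      moduleLength (X → k) M ≤ moduleLength (X × X → k) (doubleSub M) := by
  have hle : moduleLength (X → k) M ≤ moduleLength (X × X → k) (doubleSub M) :=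
    Order.krullDim_le_of_strictMono _ (liftDouble_strictMono M)
  exact ⟨fun h => hfin (top_le_iff.mp (h ▸ hle)), hle⟩
end
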